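/- Let G be a finite simple graph and let ⊑ be a partial order on the set C(G) of maximal cliques of G such that every two maximal cliques have a least upper bound and a greatest lower bound under ⊑, and conditions (i) and (ii) hold: (i) for all maximal cliques A ⊑ B ⊑ C, A ∩ C ⊆ B; (ii) for all maximal cliques A, B, A ∪ B ⊆ (A ∨ B) ∪ (A ∧ B). Define a binary relation R on V(G) by: x R y if and only if x and y are not adjacent in G (including x = y) and there exist maximal cliques C', C'' of G with C' ⊑ C'', x ∈ C' and y ∈ C''. Then R is a partial order on V(G), and for all distinct x, y ∈ V(G), x and y are comparable under R if and only if x and y are not adjacent in G (so R is a transitive orientation of the complement of G). -/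

import Mathlib

/-- A maximal clique of `G`: a clique not properly contained in any other clique. -/
def MaxCliq {V : Type*} (G : SimpleGraph V) (A : Set V) : Prop :=
  G.IsClique A ∧ ∀ B : Set V, G.IsClique B → A ⊆ B → A = B

/-- Every clique of a finite graph extends to a maximal clique. -/
lemma extmax {V : Type*} [Fintype V] (G : SimpleGraph V) (S : Set V) (hS : G.IsClique S) :
    ∃ A, MaxCliq G A ∧ S ⊆ A := by
  obtain ⟨A, hA, hmax⟩ := Set.Finite.exists_maximalFor id
    {B : Set V | G.IsClique B ∧ S ⊆ B} (Set.toFinite _) ⟨S, hS, subset_rfl⟩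
  exact ⟨A, ⟨hA.1, fun C hC hsub => hsub.antisymm (hmax ⟨hC, hA.2.trans hsub⟩ hsub)⟩, hA.2⟩

/-- Given a lattice structure on the maximal cliques of `G` satisfying conditions
(i) and (ii), the relation `R` (x R y iff x,y non-adjacent and some maximal clique
containing x is `⊑` some maximal clique containing y) is a partial order on the
vertices, and it is a transitive orientation of the complement of `G`. -/
theorem stmt12 {V : Type*} [Fintype V] (G : SimpleGraph V)
    (r : Set V → Set V → Prop) (jn mt : Set V → Set V → Set V)
    (hrefl : ∀ A, MaxCliq G A → r A A)
    (hantisymm : ∀ A B, MaxCliq G A → MaxCliq G B → r A B → r B A → A = B)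
    (htrans : ∀ A B C, MaxCliq G A → MaxCliq G B → MaxCliq G C → r A B → r B C → r A C)
    (hjn : ∀ A B, MaxCliq G A → MaxCliq G B →
      MaxCliq G (jn A B) ∧ r A (jn A B) ∧ r B (jn A B) ∧
      (∀ C, MaxCliq G C → r A C → r B C → r (jn A B) C))
    (hmt : ∀ A B, MaxCliq G A → MaxCliq G B →
      MaxCliq G (mt A B) ∧ r (mt A B) A ∧ r (mt A B) B ∧
      (∀ C, MaxCliq G C → r C A → r C B → r C (mt A B)))
    (hi : ∀ A B C, MaxCliq G A → MaxCliq G B → MaxCliq G C → r A B → r B C → A ∩ C ⊆ B)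
    (hii : ∀ A B, MaxCliq G A → MaxCliq G B → A ∪ B ⊆ jn A B ∪ mt A B)
    (R : V → V → Prop)
    (hR : ∀ x y, R x y ↔ ¬ G.Adj x y ∧
      ∃ C' C'' : Set V, MaxCliq G C' ∧ MaxCliq G C'' ∧ r C' C'' ∧ x ∈ C' ∧ y ∈ C'') :
    (∀ x, R x x) ∧
    (∀ x y, R x y → R y x → x = y) ∧
    (∀ x y z, R x y → R y z → R x z) ∧
    (∀ x y, x ≠ y → ((R x y ∨ R y x) ↔ ¬ G.Adj x y)) := by
  -- no clique contains two distinct non-adjacent vertices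
  have nocom : ∀ {x y : V} {S : Set V}, x ≠ y → ¬ G.Adj x y → G.IsClique S →
      x ∈ S → y ∈ S → False := fun hne hna hS hx hy => hna (hS hx hy hne)
  have exmax : ∀ x : V, ∃ A, MaxCliq G A ∧ x ∈ A := by
    intro x
    obtain ⟨A, hA, hx⟩ := extmax G {x} (by simp [SimpleGraph.isClique_singleton])
    exact ⟨A, hA, hx rfl⟩
  -- key asymmetry lemma
  have asym : ∀ x y, x ≠ y → R x y → R y x → False := by
    intro x y hne hxy hyx
    obtain ⟨hna, A, B, hA, hB, hAB, hxA, hyB⟩ := (hR x y).1 hxy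
    obtain ⟨hna', C, D, hC, hD, hCD, hyC, hxD⟩ := (hR y x).1 hyx
    obtain ⟨hmtM, hmtA, hmtC, -⟩ := hmt A C hA hC
    obtain ⟨hjnM, hjnA, hjnC, -⟩ := hjn A C hA hC
    have hx' := hii A C hA hC (Set.mem_union_left _ hxA)
    have hy' := hii A C hA hC (Set.mem_union_right _ hyC)
    rcases hx' with hxj | hxm
    · rcases hy' with hyj | hym
      · exact nocom hne hna hjnM.1 hxj hyj
      · have hyA : y ∈ A := hi (mt A C) A B hmtM hA hB hmtA hAB ⟨hym, hyB⟩
        exact nocom hne hna hA.1 hxA hyA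
    · rcases hy' with hyj | hym
      · have hxC : x ∈ C := hi (mt A C) C D hmtM hC hD hmtC hCD ⟨hxm, hxD⟩
        exact nocom hne hna hC.1 hxC hyC
      · exact nocom hne hna hmtM.1 hxm hym
  -- comparability of non-adjacent distinct vertices
  have comp : ∀ x y, x ≠ y → ¬ G.Adj x y → R x y ∨ R y x := by
    intro x y hne hna
    obtain ⟨A, hA, hxA⟩ := exmax x
    obtain ⟨B, hB, hyB⟩ := exmax y
    obtain ⟨hmtM, hmtA, hmtB, -⟩ := hmt A B hA hB
    obtain ⟨hjnM, hjnA, hjnB, -⟩ := hjn A B hA hB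
    have hmj : r (mt A B) (jn A B) := htrans _ _ _ hmtM hA hjnM hmtA hjnA
    have hx' := hii A B hA hB (Set.mem_union_left _ hxA)
    have hy' := hii A B hA hB (Set.mem_union_right _ hyB)
    rcases hx' with hxj | hxm
    · rcases hy' with hyj | hym
      · exact absurd (hjnM.1 hxj hyj hne) hna
      · exact Or.inr ((hR y x).2 ⟨fun h => hna h.symm, mt A B, jn A B,
          hmtM, hjnM, hmj, hym, hxj⟩)
    · rcases hy' with hyj | hym
      · exact Or.inl ((hR x y).2 ⟨hna, mt A B, jn A B, hmtM, hjnM, hmj, hxm, hyj⟩)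
      · exact absurd (hmtM.1 hxm hym hne) hna
  -- transitivity
  have trans : ∀ x y z, R x y → R y z → R x z := by
    intro x y z hxy hyz
    by_cases hxey : x = y
    · subst hxey; exact hyz
    by_cases hyez : y = z
    · subst hyez; exact hxy
    by_cases hxez : x = z
    · subst hxez; exact (asym x y hxey hxy hyz).elim
    obtain ⟨hnxy, A, B, hA, hB, hAB, hxA, hyB⟩ := (hR x y).1 hxy
    obtain ⟨hnyz, C, D, hC, hD, hCD, hyC, hzD⟩ := (hR y z).1 hyz
    -- x and z are non-adjacent
    have hnxz : ¬ G.Adj x z := by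
      intro hadj
      obtain ⟨M, hM, hsub⟩ := extmax G {x, z}
        (SimpleGraph.isClique_pair.mpr (fun _ => hadj))
      have hxM : x ∈ M := hsub (Or.inl rfl)
      have hzM : z ∈ M := hsub (Or.inr rfl)
      obtain ⟨hmtK, hmtM', hmtC', -⟩ := hmt M C hM hC
      obtain ⟨hjnK, hjnM', hjnC', -⟩ := hjn M C hM hC
      have hmj : r (mt M C) (jn M C) := htrans _ _ _ hmtK hM hjnK hmtM' hjnM'
      have hy' := hii M C hM hC (Set.mem_union_right _ hyC)
      rcases hy' with hyj | hym
      · -- y ∈ jn M C : then x ∈ mt M C and z ∈ mt M C would give R z y... use z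
        have hz' := hii M C hM hC (Set.mem_union_left _ hzM)
        have hzm : z ∈ mt M C := by
          rcases hz' with hzj | hzm
          · exact absurd (hjnK.1 hzj hyj (Ne.symm hyez)) (fun h => hnyz h.symm)
          · exact hzm
        exact asym y z hyez hyz ((hR z y).2 ⟨fun h => hnyz h.symm, mt M C, jn M C,
          hmtK, hjnK, hmj, hzm, hyj⟩)
      · -- y ∈ mt M C : then x ∈ jn M C, giving R y x
        have hx' := hii M C hM hC (Set.mem_union_left _ hxM)
        have hxj : x ∈ jn M C := by
          rcases hx' with hxj | hxm
          · exact hxj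
          · exact absurd (hmtK.1 hxm hym hxey) hnxy
        exact asym x y hxey hxy ((hR y x).2 ⟨fun h => hnxy h.symm, mt M C, jn M C,
          hmtK, hjnK, hmj, hym, hxj⟩)
    -- now build the chain
    have hyBC := hii B C hB hC (Set.mem_union_left _ hyB)
    rcases hyBC with hyF | hyE
    · -- y ∈ F := jn B C;  A ⊑ B ⊑ F
      obtain ⟨hFM, hBF, hCF, -⟩ := hjn B C hB hC
      obtain ⟨hJM, hDJ, hFJ, -⟩ := hjn D (jn B C) hD hFM
      have hy' := hii D (jn B C) hD hFM (Set.mem_union_right _ hyF)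
      rcases hy' with hyJ | hyMt
      · -- y ∈ jn D F ⇒ y ∈ D by (i) on C ⊑ D ⊑ jn D F : contradiction with z ∈ D
        have hyD : y ∈ D := hi C D (jn D (jn B C)) hC hD hJM hCD hDJ ⟨hyC, hyJ⟩
        exact (nocom hyez hnyz hD.1 hyD hzD).elim
      · -- y ∈ mt D F ; then z ∈ jn D F
        obtain ⟨hMtM, hMtD, hMtF, -⟩ := hmt D (jn B C) hD hFM
        have hz' := hii D (jn B C) hD hFM (Set.mem_union_left _ hzD)
        have hzJ : z ∈ jn D (jn B C) := by
          rcases hz' with hzj | hzm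
          · exact hzj
          · exact (nocom (Ne.symm hyez) (fun h => hnyz h.symm) hMtM.1 hzm hyMt).elim
        have hchain : r A (jn D (jn B C)) :=
          htrans _ _ _ hA hFM hJM (htrans _ _ _ hA hB hFM hAB hBF) hFJ
        exact (hR x z).2 ⟨hnxz, A, jn D (jn B C), hA, hJM, hchain, hxA, hzJ⟩
    · -- y ∈ E := mt B C ;  E ⊑ C ⊑ D
      obtain ⟨hEM, hEB, hEC, -⟩ := hmt B C hB hC
      obtain ⟨hMtM, hMtA, hMtE, -⟩ := hmt A (mt B C) hA hEM
      have hx' := hii A (mt B C) hA hEM (Set.mem_union_left _ hxA)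
      have hy' := hii A (mt B C) hA hEM (Set.mem_union_right _ hyE)
      rcases hx' with hxJ | hxMt
      · -- x ∈ jn A E ⇒ y ∈ mt A E ⇒ y ∈ A by (i) on mt A E ⊑ A ⊑ B : contra with x ∈ A
        obtain ⟨hJM, hAJ, hEJ, -⟩ := hjn A (mt B C) hA hEM
        have hyMt : y ∈ mt A (mt B C) := by
          rcases hy' with hyj | hym
          · exact (nocom hxey hnxy hJM.1 hxJ hyj).elim
          · exact hym
        have hyA : y ∈ A := hi (mt A (mt B C)) A B hMtM hA hB hMtA hAB ⟨hyMt, hyB⟩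
        exact (nocom hxey hnxy hA.1 hxA hyA).elim
      · -- x ∈ mt A E ⊑ E ⊑ C ⊑ D ∋ z
        have hchain : r (mt A (mt B C)) D :=
          htrans _ _ _ hMtM hC hD (htrans _ _ _ hMtM hEM hC hMtE hEC) hCD
        exact (hR x z).2 ⟨hnxz, mt A (mt B C), D, hMtM, hD, hchain, hxMt, hzD⟩
  refine ⟨?_, ?_, trans, ?_⟩
  · intro x
    obtain ⟨A, hA, hxA⟩ := exmax x
    exact (hR x x).2 ⟨G.irrefl, A, A, hA, hA, hrefl A hA, hxA, hxA⟩
  · intro x y hxy hyx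
    by_contra hne
    exact asym x y hne hxy hyx
  · intro x y hne
    constructor
    · rintro (h | h)
      · exact ((hR x y).1 h).1
      · exact fun hadj => ((hR y x).1 h).1 hadj.symm
    · exact comp x y hne
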